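/- Let a, b, c be real numbers. For all 3×3 matrices P, Q whose entries are real polynomials, the functions x ↦ (P·D₁)(x)·W(x)·Q(x)ᵀ and x ↦ P(x)·W(x)·((Q·D₁)(x))ᵀ are (entrywise) integrable on ℝ and have equal integrals; that is, D₁ is W-symmetric: ⟨P·D₁, Q⟩_W = ⟨P, Q·D₁⟩_W. -/

import Mathlib

open Matrix Polynomial MeasureTheory

/-- The 3×3 Hermite-type weight matrix. -/
noncomputable def W (a b c : ℝ) (x : ℝ) : Matrix (Fin 3) (Fin 3) ℝ :=
  Real.exp (-x ^ 2) •
    !![Real.exp (2 * b * x) + a ^ 2 * x ^ 2, a * x, a * c * x ^ 2;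
       a * x, 1, c * x;
       a * c * x ^ 2, c * x, c ^ 2 * x ^ 2 + 1]

/-- First-order (polynomial) coefficient of the operator D₁. -/
noncomputable def F1p (a b c : ℝ) : Matrix (Fin 3) (Fin 3) (Polynomial ℝ) :=
  !![C (2 * b) - 2 * X, C (-2 * a * b) * X + C (2 * a), 0;
     0, -2 * X, 0;
     0, C (2 * c), -2 * X]

/-- Zeroth-order coefficient of the operator D₁. -/
noncomputable def F0p : Matrix (Fin 3) (Fin 3) (Polynomial ℝ) :=
  !![0, 0, 0; 0, 2, 0; 0, 0, 0]

/-- The right action of the operator D₁ on a matrix polynomial: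
P·D₁ = P'' + P'·F₁ + P·F₀. -/
noncomputable def rightD1 (a b c : ℝ) (P : Matrix (Fin 3) (Fin 3) (Polynomial ℝ)) :
    Matrix (Fin 3) (Fin 3) (Polynomial ℝ) :=
  P.map (fun p => derivative (derivative p))
    + P.map (fun p => derivative p) * F1p a b c + P * F0p

/-- Entrywise evaluation of a matrix polynomial. -/
noncomputable def evalM (P : Matrix (Fin 3) (Fin 3) (Polynomial ℝ)) (x : ℝ) :
    Matrix (Fin 3) (Fin 3) ℝ :=
  P.map (Polynomial.eval x)

/-! ### Auxiliary analytic lemmas -/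

open Filter

noncomputable def gaussTerm (c : ℝ) (p : Polynomial ℝ) (x : ℝ) : ℝ :=
  p.eval x * Real.exp (c * x - x ^ 2)

lemma integrable_pow_gauss (n : ℕ) :
    Integrable fun x : ℝ => x ^ n * Real.exp (-x ^ 2) := by
  have h1 : Integrable fun x : ℝ =>
      Real.exp (-1 * x ^ 2) + (2:ℝ) ^ n * n.factorial * Real.exp (-(1/2) * x ^ 2) :=
    (integrable_exp_neg_mul_sq one_pos).add
      ((integrable_exp_neg_mul_sq (by norm_num)).const_mul _)
  refine h1.mono' (Continuous.aestronglyMeasurable (by continuity)) ?_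
  filter_upwards with x
  have hx2 : Real.exp (-x ^ 2) = Real.exp (-1 * x ^ 2) := by ring_nf
  rw [Real.norm_eq_abs, abs_mul, abs_of_pos (Real.exp_pos _), abs_pow]
  rcases le_or_gt |x| 1 with h | h
  · have h1 : |x| ^ n ≤ 1 := pow_le_one₀ (abs_nonneg x) h
    have h2 : |x| ^ n * Real.exp (-x ^ 2) ≤ 1 * Real.exp (-1 * x ^ 2) := by
      rw [← hx2]; exact mul_le_mul_of_nonneg_right h1 (Real.exp_pos _).le
    have h3 : 0 ≤ (2:ℝ) ^ n * n.factorial * Real.exp (-(1/2) * x ^ 2) := by positivity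
    linarith
  · have hle : |x| ≤ x ^ 2 := by nlinarith [sq_abs x, abs_nonneg x]
    have h2 : |x| ^ n ≤ (x ^ 2) ^ n := pow_le_pow_left₀ (abs_nonneg x) hle n
    have h3 : (x ^ 2 / 2) ^ n / n.factorial ≤ Real.exp (x ^ 2 / 2) :=
      Real.pow_div_factorial_le_exp _ (by positivity) n
    have h4 : (x ^ 2) ^ n ≤ (2:ℝ) ^ n * n.factorial * Real.exp (x ^ 2 / 2) := by
      have hfac : (0:ℝ) < n.factorial := by positivity
      have := (div_le_iff₀ hfac).mp h3
      calc (x ^ 2) ^ n = (2:ℝ) ^ n * (x ^ 2 / 2) ^ n := by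
            rw [← mul_pow]; ring_nf
        _ ≤ (2:ℝ) ^ n * (n.factorial * Real.exp (x ^ 2 / 2)) := by
            apply mul_le_mul_of_nonneg_left _ (by positivity)
            linarith
        _ = (2:ℝ) ^ n * n.factorial * Real.exp (x ^ 2 / 2) := by ring
    have h5 : |x| ^ n * Real.exp (-x ^ 2)
        ≤ (2:ℝ) ^ n * n.factorial * Real.exp (x ^ 2 / 2) * Real.exp (-x ^ 2) :=
      mul_le_mul_of_nonneg_right (h2.trans h4) (Real.exp_pos _).le
    have h6 : (2:ℝ) ^ n * n.factorial * Real.exp (x ^ 2 / 2) * Real.exp (-x ^ 2)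
        = (2:ℝ) ^ n * n.factorial * Real.exp (-(1/2) * x ^ 2) := by
      rw [mul_assoc, ← Real.exp_add]; ring_nf
    have h7 : 0 < Real.exp (-1 * x ^ 2) := Real.exp_pos _
    linarith

lemma integrable_poly_gauss0 (p : Polynomial ℝ) :
    Integrable fun x : ℝ => p.eval x * Real.exp (-x ^ 2) := by
  have h : (fun x : ℝ => p.eval x * Real.exp (-x ^ 2)) =
      fun x => ∑ i ∈ Finset.range (p.natDegree + 1),
        p.coeff i * (x ^ i * Real.exp (-x ^ 2)) := by
    funext x
    rw [Polynomial.eval_eq_sum_range, Finset.sum_mul]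
    exact Finset.sum_congr rfl fun i _ => by ring
  rw [h]
  exact integrable_finset_sum _ fun i _ => (integrable_pow_gauss i).const_mul _

lemma integrable_gaussTerm (c : ℝ) (p : Polynomial ℝ) :
    Integrable (gaussTerm c p) := by
  have h := (((integrable_poly_gauss0 (p.comp (X + C (c/2)))).const_mul
      (Real.exp (c ^ 2 / 4))).comp_sub_right (c/2))
  refine h.congr (Filter.Eventually.of_forall fun x => ?_)
  show Real.exp (c ^ 2 / 4) * ((p.comp (X + C (c/2))).eval (x - c/2)
      * Real.exp (-(x - c/2) ^ 2)) = gaussTerm c p x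
  rw [Polynomial.eval_comp]
  simp only [eval_add, eval_X, eval_C]
  rw [show x - c/2 + c/2 = x by ring, gaussTerm, mul_comm (Real.exp (c^2/4)),
    mul_assoc, ← Real.exp_add]
  ring_nf

lemma tendsto_gaussTerm_atTop (c : ℝ) (p : Polynomial ℝ) :
    Tendsto (gaussTerm c p) atTop (nhds 0) := by
  have hb : Tendsto (fun x : ℝ => |p.eval x / Real.exp x|) atTop (nhds 0) := by
    simpa using (Polynomial.tendsto_div_exp_atTop p).abs
  refine squeeze_zero_norm' ?_ hb
  filter_upwards [Filter.eventually_ge_atTop (max 0 (c + 1))] with x hx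
  have hx0 : (0:ℝ) ≤ x := le_trans (le_max_left _ _) hx
  have hxc : c + 1 ≤ x := le_trans (le_max_right _ _) hx
  have hexp : c * x - x ^ 2 ≤ -x := by nlinarith
  rw [Real.norm_eq_abs, gaussTerm, abs_mul, abs_of_pos (Real.exp_pos _), abs_div,
    abs_of_pos (Real.exp_pos x), div_eq_mul_inv, ← Real.exp_neg]
  exact mul_le_mul_of_nonneg_left (Real.exp_le_exp.2 hexp) (abs_nonneg _)

lemma tendsto_gaussTerm_atBot (c : ℝ) (p : Polynomial ℝ) :
    Tendsto (gaussTerm c p) atBot (nhds 0) := by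
  have h := (tendsto_gaussTerm_atTop (-c) (p.comp (-X))).comp tendsto_neg_atBot_atTop
  refine h.congr fun x => ?_
  show gaussTerm (-c) (p.comp (-X)) (-x) = gaussTerm c p x
  simp only [gaussTerm, Polynomial.eval_comp, eval_neg, eval_X]
  rw [neg_neg]
  ring_nf

lemma hasDerivAt_gaussTerm (c : ℝ) (p : Polynomial ℝ) (x : ℝ) :
    HasDerivAt (gaussTerm c p)
      (gaussTerm c (derivative p + (C c - 2 * X) * p) x) x := by
  have h1 : HasDerivAt (fun x : ℝ => c * x - x ^ 2) (c - 2 * x) x := by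
    simpa using ((hasDerivAt_id x).const_mul c).fun_sub (hasDerivAt_pow 2 x)
  have h2 := (p.hasDerivAt x).mul h1.exp
  refine h2.congr_deriv ?_
  symm
  simp only [gaussTerm, eval_add, eval_mul, eval_sub, eval_C, eval_X, eval_ofNat]
  ring

/-! ### Auxiliary algebraic definitions and identities -/

noncomputable def Mm (a c : ℝ) : Matrix (Fin 3) (Fin 3) (Polynomial ℝ) :=
  !![C (a ^ 2) * X ^ 2, C a * X, C (a * c) * X ^ 2;
     C a * X, 1, C c * X;
     C (a * c) * X ^ 2, C c * X, C (c ^ 2) * X ^ 2 + 1]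

noncomputable def Bm : Matrix (Fin 3) (Fin 3) (Polynomial ℝ) :=
  !![1, 0, 0; 0, 0, 0; 0, 0, 0]

noncomputable def Km (a b c : ℝ) : Matrix (Fin 3) (Fin 3) (Polynomial ℝ) :=
  F1p a b c * Mm a c - (Mm a c).map (fun p => derivative p) + (2 * X : Polynomial ℝ) • Mm a c

noncomputable def Phif (a b c : ℝ) (P Q : Matrix (Fin 3) (Fin 3) (Polynomial ℝ)) :
    Matrix (Fin 3) (Fin 3) (Polynomial ℝ) :=
  P.map (fun p => derivative p) * Mm a c * Qᵀ - P * Mm a c * (Q.map (fun p => derivative p))ᵀ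
    + P * Km a b c * Qᵀ

noncomputable def Phig (P Q : Matrix (Fin 3) (Fin 3) (Polynomial ℝ)) :
    Matrix (Fin 3) (Fin 3) (Polynomial ℝ) :=
  P.map (fun p => derivative p) * Bm * Qᵀ - P * Bm * (Q.map (fun p => derivative p))ᵀ

lemma fin3_mk_two (h : 2 < 3) : (⟨2, h⟩ : Fin 3) = 2 := rfl

set_option maxHeartbeats 2000000 in
lemma E2 (a b c : ℝ) (P Q : Matrix (Fin 3) (Fin 3) (Polynomial ℝ)) :
    (Phig P Q).map (fun p => derivative p) + (C (2 * b) - 2 * X : Polynomial ℝ) • Phig P Q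
      = rightD1 a b c P * Bm * Qᵀ - P * Bm * (rightD1 a b c Q)ᵀ := by
  rw [← Matrix.ext_iff]
  intro i j
  fin_cases i <;> fin_cases j <;>
  · simp only [Fin.mk_zero, Fin.mk_one, fin3_mk_two]
    simp only [Phig, rightD1, F1p, F0p, Bm, Matrix.mul_apply, Fin.sum_univ_three,
      Matrix.transpose_apply, Matrix.map_apply, Matrix.add_apply, Matrix.sub_apply,
      Matrix.smul_apply, smul_eq_mul,
      Matrix.cons_val', Matrix.cons_val_zero, Matrix.cons_val_one, Matrix.cons_val_two,
      Matrix.head_cons, Matrix.head_fin_const, Matrix.empty_val', Matrix.cons_val_fin_one,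
      Matrix.of_apply, Matrix.vecTail, Matrix.vecHead, Matrix.cons_val_succ, Function.comp]
    simp only [derivative_add, derivative_sub, derivative_mul, derivative_C, derivative_X,
      derivative_pow, derivative_ofNat, derivative_one, derivative_zero, derivative_neg,
      C_mul, C_add, C_pow, C_neg, C_sub, map_ofNat, C_1, C_0, map_natCast, Nat.cast_ofNat]
    ring

set_option maxHeartbeats 4000000 in
lemma E1 (a b c : ℝ) (P Q : Matrix (Fin 3) (Fin 3) (Polynomial ℝ)) :
    (Phif a b c P Q).map (fun p => derivative p) - (2 * X : Polynomial ℝ) • Phif a b c P Q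
      = rightD1 a b c P * Mm a c * Qᵀ - P * Mm a c * (rightD1 a b c Q)ᵀ := by
  rw [← Matrix.ext_iff]
  intro i j
  fin_cases i <;> fin_cases j <;>
  · simp only [Fin.mk_zero, Fin.mk_one, fin3_mk_two]
    simp only [Phif, Km, rightD1, F1p, F0p, Mm, Matrix.mul_apply, Fin.sum_univ_three,
      Matrix.transpose_apply, Matrix.map_apply, Matrix.add_apply, Matrix.sub_apply,
      Matrix.smul_apply, smul_eq_mul,
      Matrix.cons_val', Matrix.cons_val_zero, Matrix.cons_val_one, Matrix.cons_val_two,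
      Matrix.head_cons, Matrix.head_fin_const, Matrix.empty_val', Matrix.cons_val_fin_one,
      Matrix.of_apply, Matrix.vecTail, Matrix.vecHead, Matrix.cons_val_succ, Function.comp]
    simp only [derivative_add, derivative_sub, derivative_mul, derivative_C, derivative_X,
      derivative_pow, derivative_ofNat, derivative_one, derivative_zero, derivative_neg,
      C_mul, C_add, C_pow, C_neg, C_sub, map_ofNat, C_1, C_0, map_natCast, Nat.cast_ofNat]
    ring

/-! ### Decomposition of the weight and the key entry formula -/

lemma W_decomp (a b c x : ℝ) :
    W a b c x = Real.exp (-x ^ 2) • evalM (Mm a c) x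
      + Real.exp (2 * b * x - x ^ 2) • evalM Bm x := by
  rw [← Matrix.ext_iff]
  intro i j
  fin_cases i <;> fin_cases j <;>
  · simp only [Fin.mk_zero, Fin.mk_one, fin3_mk_two]
    simp only [W, Mm, Bm, evalM, Matrix.map_apply, Matrix.add_apply, Matrix.smul_apply,
      smul_eq_mul, eval_mul, eval_add, eval_pow, eval_C, eval_X, eval_one, eval_zero,
      Matrix.cons_val', Matrix.cons_val_zero, Matrix.cons_val_one, Matrix.cons_val_two,
      Matrix.head_cons, Matrix.head_fin_const, Matrix.empty_val', Matrix.cons_val_fin_one,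
      Matrix.of_apply, Matrix.vecTail, Matrix.vecHead, Matrix.cons_val_succ, Function.comp]
    rw [show (2*b*x - x^2 : ℝ) = -x^2 + 2*b*x by ring, Real.exp_add]
    ring

lemma evalM_mul (A B : Matrix (Fin 3) (Fin 3) (Polynomial ℝ)) (x : ℝ) :
    evalM (A * B) x = evalM A x * evalM B x := by
  have : (Polynomial.eval x : Polynomial ℝ → ℝ) = ⇑(Polynomial.evalRingHom x) := rfl
  simp only [evalM, this, Matrix.map_mul]

lemma evalM_transpose (A : Matrix (Fin 3) (Fin 3) (Polynomial ℝ)) (x : ℝ) :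
    evalM Aᵀ x = (evalM A x)ᵀ := by
  simp only [evalM, Matrix.transpose_map]

lemma entry_eq (a b c : ℝ) (R S : Matrix (Fin 3) (Fin 3) (Polynomial ℝ)) (x : ℝ) (i j : Fin 3) :
    (evalM R x * W a b c x * (evalM S x)ᵀ) i j
      = gaussTerm 0 ((R * Mm a c * Sᵀ) i j) x + gaussTerm (2*b) ((R * Bm * Sᵀ) i j) x := by
  rw [W_decomp, ← evalM_transpose]
  rw [Matrix.mul_add, Matrix.add_mul, Matrix.mul_smul, Matrix.smul_mul, Matrix.mul_smul,
    Matrix.smul_mul]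
  rw [← evalM_mul, ← evalM_mul, ← evalM_mul, ← evalM_mul]
  simp only [Matrix.add_apply, Matrix.smul_apply, smul_eq_mul, gaussTerm, evalM,
    Matrix.map_apply]
  rw [show (0:ℝ) * x - x ^ 2 = -x^2 by ring]
  ring

/-- the operator D₁ is W-symmetric: for all matrix polynomials P, Q the
functions (P·D₁)(x)·W(x)·Q(x)ᵀ and P(x)·W(x)·((Q·D₁)(x))ᵀ are entrywise integrable
on ℝ and ⟨P·D₁, Q⟩_W = ⟨P, Q·D₁⟩_W. -/
theorem D1_W_symmetric (a b c : ℝ) (P Q : Matrix (Fin 3) (Fin 3) (Polynomial ℝ)) :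
    (∀ i j, Integrable
        (fun x => (evalM (rightD1 a b c P) x * W a b c x * (evalM Q x)ᵀ) i j)) ∧
    (∀ i j, Integrable
        (fun x => (evalM P x * W a b c x * (evalM (rightD1 a b c Q) x)ᵀ) i j)) ∧
    (∀ i j, (∫ x, (evalM (rightD1 a b c P) x * W a b c x * (evalM Q x)ᵀ) i j)
        = ∫ x, (evalM P x * W a b c x * (evalM (rightD1 a b c Q) x)ᵀ) i j) := by
  have hInt : ∀ (R S : Matrix (Fin 3) (Fin 3) (Polynomial ℝ)) (i j : Fin 3),
      Integrable (fun x => (evalM R x * W a b c x * (evalM S x)ᵀ) i j) := by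
    intro R S i j
    have h : (fun x => (evalM R x * W a b c x * (evalM S x)ᵀ) i j)
        = fun x => gaussTerm 0 ((R * Mm a c * Sᵀ) i j) x
            + gaussTerm (2*b) ((R * Bm * Sᵀ) i j) x :=
      funext fun x => entry_eq a b c R S x i j
    rw [h]
    exact (integrable_gaussTerm _ _).add (integrable_gaussTerm _ _)
  refine ⟨fun i j => hInt _ _ i j, fun i j => hInt _ _ i j, fun i j => ?_⟩
  have h1 := hInt (rightD1 a b c P) Q i j
  have h2 := hInt P (rightD1 a b c Q) i j
  have key : (∫ x, ((evalM (rightD1 a b c P) x * W a b c x * (evalM Q x)ᵀ) i j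
      - (evalM P x * W a b c x * (evalM (rightD1 a b c Q) x)ᵀ) i j)) = 0 := by
    have hder : ∀ x, HasDerivAt
        (fun x => gaussTerm 0 (Phif a b c P Q i j) x + gaussTerm (2*b) (Phig P Q i j) x)
        ((evalM (rightD1 a b c P) x * W a b c x * (evalM Q x)ᵀ) i j
          - (evalM P x * W a b c x * (evalM (rightD1 a b c Q) x)ᵀ) i j) x := by
      intro x
      have hd := (hasDerivAt_gaussTerm 0 (Phif a b c P Q i j) x).add
        (hasDerivAt_gaussTerm (2*b) (Phig P Q i j) x)
      refine hd.congr_deriv ?_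
      symm
      rw [entry_eq a b c (rightD1 a b c P) Q x i j, entry_eq a b c P (rightD1 a b c Q) x i j]
      have e1 : derivative (Phif a b c P Q i j) + (C 0 - 2*X) * Phif a b c P Q i j
          = (rightD1 a b c P * Mm a c * Qᵀ) i j
            - (P * Mm a c * (rightD1 a b c Q)ᵀ) i j := by
        have h := congrArg (fun M : Matrix (Fin 3) (Fin 3) (Polynomial ℝ) => M i j)
          (E1 a b c P Q)
        simp only [Matrix.sub_apply, Matrix.map_apply, Matrix.smul_apply, smul_eq_mul] at h
        rw [C_0]
        linear_combination h
      have e2 : derivative (Phig P Q i j) + (C (2*b) - 2*X) * Phig P Q i j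
          = (rightD1 a b c P * Bm * Qᵀ) i j
            - (P * Bm * (rightD1 a b c Q)ᵀ) i j := by
        have h := congrArg (fun M : Matrix (Fin 3) (Fin 3) (Polynomial ℝ) => M i j)
          (E2 a b c P Q)
        simp only [Matrix.sub_apply, Matrix.add_apply, Matrix.map_apply, Matrix.smul_apply,
          smul_eq_mul] at h
        linear_combination h
      rw [e1, e2]
      simp only [gaussTerm, eval_sub]
      ring
    have hint : Integrable
        (fun x => (evalM (rightD1 a b c P) x * W a b c x * (evalM Q x)ᵀ) i j
          - (evalM P x * W a b c x * (evalM (rightD1 a b c Q) x)ᵀ) i j) := h1.sub h2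
    have hbot : Tendsto
        (fun x => gaussTerm 0 (Phif a b c P Q i j) x + gaussTerm (2*b) (Phig P Q i j) x)
        atBot (nhds 0) := by
      simpa using (tendsto_gaussTerm_atBot 0 (Phif a b c P Q i j)).add
        (tendsto_gaussTerm_atBot (2*b) (Phig P Q i j))
    have htop : Tendsto
        (fun x => gaussTerm 0 (Phif a b c P Q i j) x + gaussTerm (2*b) (Phig P Q i j) x)
        atTop (nhds 0) := by
      simpa using (tendsto_gaussTerm_atTop 0 (Phif a b c P Q i j)).add
        (tendsto_gaussTerm_atTop (2*b) (Phig P Q i j))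
    simpa using integral_of_hasDerivAt_of_tendsto hder hint hbot htop
  rw [integral_sub h1 h2] at key
  linarith
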